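/- Let f : ℝ → [−∞, ∞] be convex, nondecreasing, with nonempty effective domain and inf_{ℝ} f > −∞. Then the functions fₙ(x) = f(x) + x/n are convex, converge pointwise to f, and satisfy inf_{ℝ} fₙ = −∞ for every n. Hence f is not infimum-stable. -/

import Mathlib

/-- If `f : ℝ → [−∞,∞]` is convex, nondecreasing, has nonempty effective
domain and `inf f > −∞`, then `fₙ(x) = f(x) + x/n` are convex, converge
pointwise to `f`, and have `inf fₙ = −∞` for every `n ≥ 1`.
Hence `f` is not infimum-stable. -/
theorem stmt_7 (f : ℝ → EReal)
    (hf : Convex ℝ {p : ℝ × ℝ | f p.1 ≤ (p.2 : EReal)})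
    (hmono : Monotone f)
    (hdom : ∃ x : ℝ, f x ≠ ⊤)
    (hinf : (⊥ : EReal) < ⨅ x : ℝ, f x) :
    (∀ n : ℕ, Convex ℝ {p : ℝ × ℝ | f p.1 + ((p.1 / (n : ℝ) : ℝ) : EReal) ≤ (p.2 : EReal)}) ∧
    (∀ x : ℝ, Filter.Tendsto (fun n : ℕ => f x + ((x / (n : ℝ) : ℝ) : EReal))
        Filter.atTop (nhds (f x))) ∧
    (∀ n : ℕ, 0 < n → (⨅ x : ℝ, (f x + ((x / (n : ℝ) : ℝ) : EReal))) = ⊥) := by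
  have hbot : ∀ x : ℝ, f x ≠ ⊥ := fun x h => by
    have := iInf_le (fun x => f x) x
    rw [h, le_bot_iff] at this
    exact hinf.ne' this
  refine ⟨?_, ?_, ?_⟩
  · intro n
    have hlin : IsLinearMap ℝ (fun p : ℝ × ℝ => (p.1, p.2 - p.1 / (n : ℝ))) := by
      constructor
      · intro p q; simp [Prod.ext_iff]; ring
      · intro c p; simp [Prod.ext_iff]; ring
    have hset : {p : ℝ × ℝ | f p.1 + ((p.1 / (n : ℝ) : ℝ) : EReal) ≤ (p.2 : EReal)} =
        (fun p : ℝ × ℝ => (p.1, p.2 - p.1 / (n : ℝ))) ⁻¹'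
          {p : ℝ × ℝ | f p.1 ≤ (p.2 : EReal)} := by
      ext p
      simp only [Set.mem_setOf_eq, Set.mem_preimage]
      rw [EReal.coe_sub, EReal.le_sub_iff_add_le (Or.inl (EReal.coe_ne_bot _))
        (Or.inl (EReal.coe_ne_top _))]
    rw [hset]
    exact hf.linear_preimage (f := hlin.mk' _)
  · intro x
    have h1 : Filter.Tendsto (fun n : ℕ => ((x / (n : ℝ) : ℝ) : EReal))
        Filter.atTop (nhds ((0 : ℝ) : EReal)) := by
      exact EReal.tendsto_coe.2 (tendsto_const_nhds.div_atTop tendsto_natCast_atTop_atTop)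
    have hc : ContinuousAt (fun p : EReal × EReal => p.1 + p.2) (f x, ((0 : ℝ) : EReal)) :=
      EReal.continuousAt_add (Or.inr (EReal.coe_ne_bot _)) (Or.inr (EReal.coe_ne_top _))
    have h2 : Filter.Tendsto (fun n : ℕ => (f x, ((x / (n : ℝ) : ℝ) : EReal)))
        Filter.atTop (nhds (f x, ((0 : ℝ) : EReal))) :=
      Filter.Tendsto.prodMk_nhds tendsto_const_nhds h1
    have := hc.tendsto.comp h2
    simpa [Function.comp_def] using this
  · intro n hn
    obtain ⟨x₀, hx₀⟩ := hdom
    have hx₀b : f x₀ ≠ ⊥ := hbot x₀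
    lift f x₀ to ℝ using ⟨hx₀, hx₀b⟩ with c hc
    rw [iInf_eq_bot]
    intro b hb
    obtain ⟨m, hm1, hm2⟩ := exists_between hb
    have hmb : m ≠ ⊥ := hm1.ne'
    have hmt : m ≠ ⊤ := (hm2.trans_le le_top).ne
    lift m to ℝ using ⟨hmt, hmb⟩ with r hr
    set x : ℝ := min x₀ ((n : ℝ) * (r - c - 1)) with hx
    refine ⟨x, lt_of_le_of_lt ?_ hm2⟩
    have h1 : f x ≤ (c : EReal) := hc ▸ hmono (min_le_left _ _)
    have hn' : (0 : ℝ) < (n : ℝ) := by exact_mod_cast hn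
    have h2 : x / (n : ℝ) ≤ r - c - 1 := by
      rw [div_le_iff₀ hn']
      calc x ≤ (n : ℝ) * (r - c - 1) := min_le_right _ _
        _ = (r - c - 1) * n := by ring
    calc f x + ((x / (n : ℝ) : ℝ) : EReal) ≤ (c : EReal) + ((r - c - 1 : ℝ) : EReal) :=
          add_le_add h1 (EReal.coe_le_coe_iff.2 h2)
      _ = ((c + (r - c - 1) : ℝ) : EReal) := by rw [EReal.coe_add]
      _ ≤ (r : EReal) := by
          apply EReal.coe_le_coe_iff.2; linarith
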